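/- Let K be a number field with ring of integers R, and let U be a subgroup of the unit group R^× with U ≠ {1}. For each nonzero ideal 𝔞 of R, let F_𝔞 denote the set of additive characters χ : 𝔞 → 𝕋 of the additive group of 𝔞 with values in the circle group 𝕋 satisfying χ(u·x) = χ(x) for all u ∈ U and all x ∈ 𝔞. Then F_𝔞 is finite for every nonzero ideal 𝔞 of R, and the cardinality of F_𝔞 equals the cardinality of F_R (the corresponding set of U-fixed additive characters of R itself). -/

import Mathlib

open scoped NumberField

set_option synthInstance.maxHeartbeats 1000000
set_option maxHeartbeats 2000000

open AddChar in
/-- Characters of `M` vanishing on `N` correspond to characters of `M ⧸ N`. -/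
noncomputable def fixedEquiv {M : Type*} [AddCommGroup M] (N : AddSubgroup M) :
    {χ : AddChar M Circle // ∀ n ∈ N, χ n = 1} ≃ AddChar (M ⧸ N) Circle where
  toFun χ := toAddMonoidHomEquiv.symm <| QuotientAddGroup.lift N (toAddMonoidHomEquiv χ.1)
    (fun x hx => by
      show Additive.ofMul (χ.1 x) = 0
      rw [χ.2 x hx]; rfl)
  invFun ψ := ⟨ψ.compAddMonoidHom (QuotientAddGroup.mk' N), fun n hn => by
    have h0 : (QuotientAddGroup.mk' N) n = 0 := (QuotientAddGroup.eq_zero_iff n).2 hn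
    show ψ ((QuotientAddGroup.mk' N) n) = 1
    rw [h0]; exact ψ.map_zero_eq_one⟩
  left_inv χ := by ext x; rfl
  right_inv ψ := by
    ext x
    induction x using QuotientAddGroup.induction_on with
    | H z => rfl

/-- A finite abelian group has as many circle-valued characters as elements. -/
lemma card_addChar_circle (G : Type*) [AddCommGroup G] [Finite G] :
    Nat.card (AddChar G Circle) = Nat.card G := by
  cases nonempty_fintype G
  rw [Nat.card_congr AddChar.circleEquivComplex.toEquiv, Nat.card_eq_fintype_card,
    Nat.card_eq_fintype_card, AddChar.card_eq]

/-- The set of characters of `M` vanishing on a finite-index subgroup `N` is finite, of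
cardinality `Nat.card (M ⧸ N)`. -/
lemma aux_card {M : Type*} [AddCommGroup M] (N : AddSubgroup M) [hfin : Finite (M ⧸ N)] :
    {χ : AddChar M Circle | ∀ n ∈ N, χ n = 1}.Finite ∧
    {χ : AddChar M Circle | ∀ n ∈ N, χ n = 1}.ncard = Nat.card (M ⧸ N) := by
  have e := fixedEquiv N
  have hC : Finite (AddChar (M ⧸ N) Circle) :=
    Finite.of_equiv _ (AddChar.circleEquivComplex (α := M ⧸ N)).symm.toEquiv
  have hsub : Finite {χ : AddChar M Circle // ∀ n ∈ N, χ n = 1} := Finite.of_equiv _ e.symm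
  constructor
  · exact Set.finite_coe_iff.mp hsub
  · rw [← Nat.card_coe_set_eq, ← card_addChar_circle (M ⧸ N)]
    exact Nat.card_congr e

/-- Let `R` be the ring of integers of a number field `K` and let `U ≠ {1}` be a subgroup of
the unit group `Rˣ`. For each nonzero ideal `𝔞` of `R`, the set `F_𝔞` of additive characters
`χ : 𝔞 → 𝕋` fixed by every `u ∈ U` (i.e. `χ (u • x) = χ x` for all `u ∈ U`, `x ∈ 𝔞`) is
finite, and its cardinality equals that of the corresponding set `F_R` of `U`-fixed additive
characters of `R` itself. -/
theorem finite_and_card_eq_of_unitSubgroup_fixed_addChars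
    (K : Type*) [Field K] [NumberField K]
    (U : Subgroup (𝓞 K)ˣ) (hU : U ≠ ⊥)
    (𝔞 : Ideal (𝓞 K)) (h𝔞 : 𝔞 ≠ 0) :
    {χ : AddChar 𝔞 Circle | ∀ u ∈ U, ∀ x : 𝔞,
        χ ⟨(u : 𝓞 K) * (x : 𝓞 K), Ideal.mul_mem_left 𝔞 (u : 𝓞 K) x.2⟩ = χ x}.Finite ∧
    ({χ : AddChar 𝔞 Circle | ∀ u ∈ U, ∀ x : 𝔞,
        χ ⟨(u : 𝓞 K) * (x : 𝓞 K), Ideal.mul_mem_left 𝔞 (u : 𝓞 K) x.2⟩ = χ x}).ncard =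
      ({χ : AddChar (𝓞 K) Circle | ∀ u ∈ U, ∀ x : 𝓞 K, χ ((u : 𝓞 K) * x) = χ x}).ncard := by
  classical
  -- a nontrivial unit in U
  obtain ⟨⟨u, huU⟩, hu1⟩ := Subgroup.ne_bot_iff_exists_ne_one.mp hU
  have hu : u ≠ 1 := fun h => hu1 (Subtype.ext h)
  have hd : ((u : 𝓞 K) : 𝓞 K) - 1 ≠ 0 := sub_ne_zero.2 fun h => hu (Units.ext h)
  set S : Set (𝓞 K) := (fun v : (𝓞 K)ˣ => (v : 𝓞 K) - 1) '' (U : Set (𝓞 K)ˣ) with hS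
  set I : Ideal (𝓞 K) := Ideal.span S with hI
  have hdI : ((u : 𝓞 K) : 𝓞 K) - 1 ∈ I := Ideal.subset_span ⟨u, huU, rfl⟩
  have hIbot : I ≠ ⊥ := fun h => hd (by simpa [h] using hdI)
  have habsI : Ideal.absNorm I ≠ 0 := by
    rw [Ne, Ideal.absNorm_eq_zero_iff]; exact hIbot
  have habs𝔞 : Ideal.absNorm 𝔞 ≠ 0 := by
    rw [Ne, Ideal.absNorm_eq_zero_iff]; exact h𝔞
  -- the submodule of 𝔞 cut out by I * 𝔞
  set N : Submodule (𝓞 K) 𝔞 := Submodule.comap 𝔞.subtype (I * 𝔞) with hN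
  -- set equality on the 𝔞 side
  have key𝔞 : {χ : AddChar 𝔞 Circle | ∀ u ∈ U, ∀ x : 𝔞,
        χ ⟨(u : 𝓞 K) * (x : 𝓞 K), Ideal.mul_mem_left 𝔞 (u : 𝓞 K) x.2⟩ = χ x}
      = {χ : AddChar 𝔞 Circle | ∀ n ∈ N.toAddSubgroup, χ n = 1} := by
    ext χ
    simp only [Set.mem_setOf_eq]
    constructor
    · intro hχ n hn
      have hn' : (n : 𝓞 K) ∈ I * 𝔞 := by
        rw [hN] at hn; exact hn
      have hgen : ∀ m ∈ I, ∀ q ∈ 𝔞, ∃ h : m * q ∈ 𝔞, χ ⟨m * q, h⟩ = 1 := by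
        intro m hm
        rw [hI] at hm
        refine Submodule.span_induction (p := fun m _ => ∀ q ∈ 𝔞,
          ∃ h : m * q ∈ 𝔞, χ ⟨m * q, h⟩ = 1) ?_ ?_ ?_ ?_ hm
        · rintro m hmS q hq
          rw [hS] at hmS
          obtain ⟨u', hu', rfl⟩ := hmS
          refine ⟨Ideal.mul_mem_left _ _ hq, ?_⟩
          have h2 := hχ u' hu' ⟨q, hq⟩
          have h3 : (⟨(u' : 𝓞 K) * q, Ideal.mul_mem_left 𝔞 _ hq⟩ : 𝔞)
              = ⟨q, hq⟩ + ⟨((u' : 𝓞 K) - 1) * q, Ideal.mul_mem_left _ _ hq⟩ :=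
            Subtype.ext (by push_cast; ring)
          rw [h3, AddChar.map_add_eq_mul] at h2
          have := h2.symm
          nth_rewrite 1 [show χ ⟨q, hq⟩ = χ ⟨q, hq⟩ * 1 by rw [mul_one]] at this
          exact (mul_left_cancel this).symm
        · intro q hq
          refine ⟨by rw [zero_mul]; exact zero_mem _, ?_⟩
          have h0 : (⟨0 * q, by rw [zero_mul]; exact zero_mem _⟩ : 𝔞) = 0 :=
            Subtype.ext (zero_mul q)
          rw [h0]
          exact χ.map_zero_eq_one
        · intro x y hx hy ihx ihy q hq
          obtain ⟨h1, e1⟩ := ihx q hq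
          obtain ⟨h2, e2⟩ := ihy q hq
          refine ⟨by rw [add_mul]; exact add_mem h1 h2, ?_⟩
          have h4 : (⟨(x + y) * q, by rw [add_mul]; exact add_mem h1 h2⟩ : 𝔞)
              = ⟨x * q, h1⟩ + ⟨y * q, h2⟩ := Subtype.ext (by push_cast; ring)
          rw [h4, AddChar.map_add_eq_mul, e1, e2, mul_one]
        · intro a x hx ih q hq
          obtain ⟨h1, e1⟩ := ih (a * q) (Ideal.mul_mem_left _ _ hq)
          refine ⟨by rw [smul_eq_mul, show a * x * q = x * (a * q) by ring]; exact h1, ?_⟩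
          have h5 : (⟨(a • x) * q,
                by rw [smul_eq_mul, show a * x * q = x * (a * q) by ring]; exact h1⟩ : 𝔞)
              = ⟨x * (a * q), h1⟩ := Subtype.ext (by push_cast [smul_eq_mul]; ring)
          rw [h5]; exact e1
      have main : ∀ r ∈ I * 𝔞, ∃ hr : r ∈ 𝔞, χ ⟨r, hr⟩ = 1 := by
        intro r hr
        refine Submodule.mul_induction_on hr (fun m hm q hq => hgen m hm q hq) ?_
        rintro x y ⟨hx, ex⟩ ⟨hy, ey⟩
        refine ⟨add_mem hx hy, ?_⟩
        have : (⟨x + y, add_mem hx hy⟩ : 𝔞) = ⟨x, hx⟩ + ⟨y, hy⟩ := Subtype.ext rfl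
        rw [this, AddChar.map_add_eq_mul, ex, ey, mul_one]
      obtain ⟨h', e'⟩ := main _ hn'
      have : n = ⟨(n : 𝓞 K), h'⟩ := Subtype.ext rfl
      rw [this]; exact e'
    · intro hχ u' hu' x
      have hmem : ((u' : 𝓞 K) - 1) * (x : 𝓞 K) ∈ I * 𝔞 :=
        Submodule.mul_mem_mul
          (by rw [hI]; exact Ideal.subset_span (by rw [hS]; exact ⟨u', hu', rfl⟩)) x.2
      set m : 𝔞 := ⟨((u' : 𝓞 K) - 1) * (x : 𝓞 K), Ideal.mul_mem_left _ _ x.2⟩ with hm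
      have hmN : m ∈ N.toAddSubgroup := by rw [hN]; exact hmem
      have h3 : (⟨(u' : 𝓞 K) * (x : 𝓞 K), Ideal.mul_mem_left 𝔞 _ x.2⟩ : 𝔞) = x + m :=
        Subtype.ext (by push_cast [hm]; ring)
      rw [h3, AddChar.map_add_eq_mul, hχ m hmN, mul_one]
  -- set equality on the R side
  have keyR : {χ : AddChar (𝓞 K) Circle | ∀ u ∈ U, ∀ x : 𝓞 K, χ ((u : 𝓞 K) * x) = χ x}
      = {χ : AddChar (𝓞 K) Circle | ∀ n ∈ I.toAddSubgroup, χ n = 1} := by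
    ext χ
    simp only [Set.mem_setOf_eq]
    constructor
    · intro hχ n hn
      have hn' : n ∈ I := hn
      rw [hI] at hn'
      have hgen : ∀ q : 𝓞 K, χ (n * q) = 1 := by
        refine Submodule.span_induction (p := fun m _ => ∀ q : 𝓞 K, χ (m * q) = 1)
          ?_ ?_ ?_ ?_ hn'
        · rintro m hmS q
          rw [hS] at hmS
          obtain ⟨u', hu', rfl⟩ := hmS
          have h2 := hχ u' hu' q
          have h3 : (u' : 𝓞 K) * q = q + ((u' : 𝓞 K) - 1) * q := by ring
          rw [h3, AddChar.map_add_eq_mul] at h2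
          have := h2.symm
          nth_rewrite 1 [show χ q = χ q * 1 by rw [mul_one]] at this
          exact (mul_left_cancel this).symm
        · intro q
          rw [zero_mul]
          exact χ.map_zero_eq_one
        · intro x y hx hy ihx ihy q
          rw [add_mul, AddChar.map_add_eq_mul, ihx, ihy, mul_one]
        · intro a x hx ih q
          rw [smul_eq_mul, show a * x * q = x * (a * q) by ring]
          exact ih (a * q)
      have := hgen 1
      rwa [mul_one] at this
    · intro hχ u' hu' x
      have hmem : ((u' : 𝓞 K) - 1) * x ∈ I := by
        rw [hI]
        exact Ideal.mul_mem_right _ _ (Ideal.subset_span (by rw [hS]; exact ⟨u', hu', rfl⟩))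
      have h3 : (u' : 𝓞 K) * x = x + ((u' : 𝓞 K) - 1) * x := by ring
      rw [h3, AddChar.map_add_eq_mul, hχ _ hmem, mul_one]
  -- cardinality of the quotient 𝔞 ⧸ N
  have hcard : Nat.card (𝔞 ⧸ N) = Ideal.absNorm I := by
    have hle : I * 𝔞 ≤ 𝔞 := Ideal.mul_le_right
    set g : 𝔞 →ₗ[𝓞 K] (𝓞 K) ⧸ (I * 𝔞) := (I * 𝔞).mkQ.comp 𝔞.subtype with hg
    have hker : LinearMap.ker g = N := by
      ext x
      simp only [hg, hN, LinearMap.mem_ker, LinearMap.comp_apply, Submodule.mkQ_apply,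
        Submodule.mem_comap, Submodule.subtype_apply, Submodule.Quotient.mk_eq_zero]
    have hrange : LinearMap.range g = Submodule.map (I * 𝔞).mkQ 𝔞 := by
      rw [hg, LinearMap.range_comp, Submodule.range_subtype]
    have e1 := g.quotKerEquivRange
    have h3 : Nat.card (𝔞 ⧸ N) = Nat.card (Submodule.map (I * 𝔞).mkQ 𝔞) := by
      rw [← hker, ← hrange]
      exact Nat.card_congr e1.toEquiv
    have h1 : Nat.card ((𝓞 K) ⧸ (I * 𝔞)) =
        Nat.card (((𝓞 K) ⧸ (I * 𝔞)) ⧸ (Submodule.map (I * 𝔞).mkQ 𝔞).toAddSubgroup) *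
          Nat.card (Submodule.map (I * 𝔞).mkQ 𝔞) :=
      AddSubgroup.card_eq_card_quotient_mul_card_addSubgroup _
    have h2 : Nat.card (((𝓞 K) ⧸ (I * 𝔞)) ⧸ (Submodule.map (I * 𝔞).mkQ 𝔞).toAddSubgroup)
        = Nat.card ((𝓞 K) ⧸ 𝔞) :=
      Nat.card_congr (Submodule.quotientQuotientEquivQuotient (I * 𝔞) 𝔞 hle).toEquiv
    have hA : Nat.card ((𝓞 K) ⧸ (I * 𝔞)) = Ideal.absNorm I * Ideal.absNorm 𝔞 := by
      rw [← map_mul, Ideal.absNorm_apply, Submodule.cardQuot_apply]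
    have hB : Nat.card ((𝓞 K) ⧸ 𝔞) = Ideal.absNorm 𝔞 := by
      rw [Ideal.absNorm_apply, Submodule.cardQuot_apply]
    rw [h2, hB, ← h3, hA, mul_comm (Ideal.absNorm I)] at h1
    exact (Nat.eq_of_mul_eq_mul_left (Nat.pos_of_ne_zero habs𝔞) h1.symm)
  have hfinR : Finite (𝓞 K ⧸ I) := (Ideal.absNorm_ne_zero_iff I).mp habsI
  have hfinRA : Finite ((𝓞 K) ⧸ I.toAddSubgroup) := hfinR
  have hfin𝔞 : Finite (𝔞 ⧸ N) := Nat.finite_of_card_ne_zero (by rw [hcard]; exact habsI)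
  have hfin𝔞A : Finite ((𝔞 : Type _) ⧸ N.toAddSubgroup) := hfin𝔞
  have hcardR : Nat.card ((𝓞 K) ⧸ I.toAddSubgroup) = Ideal.absNorm I := by
    show Nat.card (𝓞 K ⧸ I) = Ideal.absNorm I
    rw [Ideal.absNorm_apply, Submodule.cardQuot_apply]
  obtain ⟨hf𝔞, hc𝔞⟩ := aux_card N.toAddSubgroup
  obtain ⟨hfR, hcR⟩ := aux_card I.toAddSubgroup
  rw [key𝔞, keyR]
  refine ⟨hf𝔞, ?_⟩
  rw [hc𝔞, hcR, hcardR]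
  show Nat.card (𝔞 ⧸ N) = _
  rw [hcard]
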